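/- Let x be an alcove and let λ ∈ ℤⁿ be dominant (weakly decreasing). If x is λ-permissible, i.e., dom(x^{(i)} - ϖ_{i-1}) ⪯ λ for all 1 ≤ i ≤ n, then rot(x) is also λ-permissible. -/
import Mathlib


open Finset

/-- Standard basis vector `e_j` in `ℤⁿ`. -/
def ev (n : ℕ) (j : Fin n) : Fin n → ℤ := fun k => if k = j then 1 else 0

/-- The coweight `ϖ_t = e_1 + ⋯ + e_t` (t ones followed by zeros). -/
def varpi (n t : ℕ) : Fin n → ℤ := fun j => if (j : ℕ) < t then 1 else 0

/-- Dominance order `μ ⪯ λ`: equal total sums, partial sums of `μ` bounded by those of `λ`. -/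
def DomLE {n : ℕ} (μ lam : Fin n → ℤ) : Prop :=
  (∑ i, μ i = ∑ i, lam i) ∧
  ∀ k : Fin n, ∑ i ∈ Finset.Iic k, μ i ≤ ∑ i ∈ Finset.Iic k, lam i

/-- A coweight is dominant iff its coordinates are weakly decreasing. -/
def IsDominant {n : ℕ} (v : Fin n → ℤ) : Prop := ∀ i j : Fin n, i ≤ j → v j ≤ v i

/-- The weakly decreasing rearrangement `dom(v)` of `v`. -/
noncomputable def domOf {n : ℕ} (v : Fin n → ℤ) : Fin n → ℤ :=
  v ∘ Tuple.sort (fun i => -v i)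

/-- `succA x i` is `x^{(i+1)}`, with the convention `x^{(n+1)} = x^{(1)} + (1,…,1)`. -/
def succA {n : ℕ} (x : Fin n → Fin n → ℤ) (i : Fin n) : Fin n → ℤ :=
  if h : (i : ℕ) + 1 < n then x ⟨(i : ℕ) + 1, h⟩ else fun j => x ⟨0, i.pos⟩ j + 1

/-- A tuple `(x^{(1)},…,x^{(n)})` is an alcove. -/
def IsAlcove {n : ℕ} (x : Fin n → Fin n → ℤ) : Prop :=
  (∀ i : Fin n, ∀ j, x i j ≤ succA x i j) ∧
  (∀ i : Fin n, (i : ℕ) + 1 < n → ∑ j, succA x i j = (∑ j, x i j) + 1)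

/-- `P` is the permutation `P(x)` of the alcove `x`: `x^{(i+1)} = x^{(i)} + e_{P(x)(i)}`. -/
def IsPermOf {n : ℕ} (x : Fin n → Fin n → ℤ) (P : Equiv.Perm (Fin n)) : Prop :=
  ∀ i : Fin n, ∀ j, succA x i j = x i j + ev n (P i) j

/-- A permutation acts on `ℤⁿ` by permuting coordinates: `(σv)_{σ(i)} = v_i`. -/
def permAct {n : ℕ} (σ : Equiv.Perm (Fin n)) (v : Fin n → ℤ) : Fin n → ℤ :=
  fun j => v (σ.symm j)

/-- The `n`-cycle `c = (1 2 ⋯ n)`. -/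
def cyc (n : ℕ) [NeZero n] : Equiv.Perm (Fin n) := Equiv.addRight 1

/-- Rotation of alcoves. -/
def rotA {n : ℕ} [NeZero n] (x : Fin n → Fin n → ℤ) : Fin n → Fin n → ℤ := fun i =>
  if h : (i : ℕ) + 1 < n then
    permAct (cyc n)⁻¹ (fun j => x ⟨(i : ℕ) + 1, h⟩ j - varpi n 1 j)
  else
    fun j => permAct (cyc n)⁻¹ (x 0) j + varpi n (n - 1) j

/-- An alcove is `λ`-permissible if `dom(x^{(i)} - ϖ_{i-1}) ⪯ λ` for all `i`. -/
noncomputable def Permissible {n : ℕ} (lam : Fin n → ℤ) (x : Fin n → Fin n → ℤ) : Prop :=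
  ∀ i : Fin n, DomLE (domOf (fun j => x i j - varpi n (i : ℕ) j)) lam

/-- The Kottwitz–Rapoport relation `i ⊴_x j` (six-case rule). -/
def TriLE {n : ℕ} (x : Fin n → Fin n → ℤ) (P : Equiv.Perm (Fin n)) (i j : Fin n) : Prop :=
  (x ⟨0, i.pos⟩ j < x ⟨0, i.pos⟩ i) ∨
  (x ⟨0, i.pos⟩ i = x ⟨0, i.pos⟩ j ∧
    ((P.symm i < i ∧ P.symm j < j ∧ j ≤ i) ∨
     (P.symm i < i ∧ j ≤ P.symm j) ∨
     (P.symm i = i ∧ P.symm j = j ∧ i = j) ∨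
     (P.symm i = i ∧ j < P.symm j) ∨
     (i < P.symm i ∧ j < P.symm j ∧ j ≤ i)))

lemma domOf_comp {n : ℕ} (v : Fin n → ℤ) (σ : Equiv.Perm (Fin n)) :
    domOf (v ∘ σ) = domOf v := by
  have h := Tuple.comp_perm_comp_sort_eq_comp_sort (σ := σ) (f := fun i => -v i)
  funext k
  have h2 := congrFun h k
  simp only [Function.comp_apply] at h2
  have e1 : domOf (v ∘ σ) k = v (σ (Tuple.sort ((fun i => -v i) ∘ σ) k)) := rfl
  have e2 : domOf v k = v (Tuple.sort (fun i => -v i) k) := rfl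
  rw [e1, e2]
  omega

theorem rot_permissible (n : ℕ) [NeZero n] (x : Fin n → Fin n → ℤ) (hx : IsAlcove x)
    (lam : Fin n → ℤ) (hlam : IsDominant lam) (hperm : Permissible lam x) :
    Permissible lam (rotA x) := by
  intro i
  by_cases h : (i : ℕ) + 1 < n
  · have key : (fun j => rotA x i j - varpi n (i : ℕ) j)
        = (fun j => x ⟨(i : ℕ) + 1, h⟩ j - varpi n ((⟨(i : ℕ) + 1, h⟩ : Fin n) : ℕ) j)
          ∘ ⇑(Equiv.addRight (1 : Fin n)) := by
      funext j
      have hstep : rotA x i j = x ⟨(i : ℕ) + 1, h⟩ (j + 1) - varpi n 1 (j + 1) := by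
        simp only [rotA, dif_pos h]; rfl
      have hiv : ((⟨(i : ℕ) + 1, h⟩ : Fin n) : ℕ) = (i : ℕ) + 1 := rfl
      have hv : ((j + 1 : Fin n) : ℕ) = ((j : ℕ) + 1) % n := by
        simp [Fin.add_def, Nat.one_mod_eq_one.mpr (by omega : n ≠ 1)]
      have hjn : (j : ℕ) < n := j.isLt
      have hm : ((j : ℕ) + 1 = n ∧ ((j : ℕ) + 1) % n = 0) ∨ ((j : ℕ) + 1) % n = (j : ℕ) + 1 := by
        rcases eq_or_lt_of_le (Nat.succ_le_of_lt hjn) with h1 | h1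
        · rw [Nat.succ_eq_add_one] at h1; exact Or.inl ⟨h1, by rw [h1, Nat.mod_self]⟩
        · right; exact Nat.mod_eq_of_lt h1
      have hm2 : ((j : ℕ) + 1) % n < n := Nat.mod_lt _ (by omega)
      have hv2 : varpi n 1 (j + 1) + varpi n (i : ℕ) j = varpi n ((i : ℕ) + 1) (j + 1) := by
        simp only [varpi, hv]
        rcases hm with ⟨hm1, hm⟩ | hm <;> rw [hm] <;> split_ifs <;> omega
      simp only [Function.comp_apply, Equiv.coe_addRight, hstep, hiv]
      rw [sub_sub, hv2]
    rw [key, domOf_comp]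
    exact hperm ⟨(i : ℕ) + 1, h⟩
  · have key : (fun j => rotA x i j - varpi n (i : ℕ) j)
        = (fun j => x 0 j - varpi n ((0 : Fin n) : ℕ) j) ∘ ⇑(Equiv.addRight (1 : Fin n)) := by
      funext j
      have hc : ((cyc n)⁻¹).symm j = j + 1 := rfl
      simp only [rotA, permAct, h, dif_neg, not_false_iff, hc, Function.comp_apply,
        Equiv.coe_addRight]
      have hi : (i : ℕ) = n - 1 := by have := i.isLt; omega
      simp only [varpi, hi, Fin.val_zero]
      split_ifs <;> omega
    rw [key, domOf_comp]
    exact hperm 0
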